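/- arXiv:2504.08545 — 2 statements merged into one kernel-verified Lean document; each statement's English description precedes it below -/
import Mathlib

section
/- Let L ∈ ℝ^{n×r} with Lᵀ L = I, and let X̂, Ŷ ∈ ℝ^{n×(m−1)} be such that Lᵀ X̂ X̂ᵀ L is invertible. Then M* = Lᵀ Ŷ X̂ᵀ L (Lᵀ X̂ X̂ᵀ L)⁻¹ minimizes over M ∈ ℝ^{r×r} the function F(M) = ‖(I − L Lᵀ) Y + L Lᵀ Ŷ − L M Lᵀ X̂‖_F². -/
open Matrix

noncomputable def frobSq {α β : Type*} [Fintype α] [Fintype β]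
    (A : Matrix α β ℝ) : ℝ := Matrix.trace (Aᵀ * A)

lemma frobSq_nonneg {α β : Type*} [Fintype α] [Fintype β]
    (A : Matrix α β ℝ) : 0 ≤ frobSq A := by
  unfold frobSq
  rw [Matrix.trace]
  apply Finset.sum_nonneg
  intro j _
  simp only [Matrix.diag_apply, Matrix.mul_apply, Matrix.transpose_apply]
  exact Finset.sum_nonneg fun i _ => mul_self_nonneg _

lemma frobSq_add {α β : Type*} [Fintype α] [Fintype β]
    (A B : Matrix α β ℝ) :
    frobSq (A + B) = frobSq A + 2 * Matrix.trace (Aᵀ * B) + frobSq B := by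
  unfold frobSq
  have h : Matrix.trace (Bᵀ * A) = Matrix.trace (Aᵀ * B) := by
    rw [← Matrix.trace_transpose (Bᵀ * A), Matrix.transpose_mul, Matrix.transpose_transpose]
  rw [Matrix.transpose_add, Matrix.add_mul, Matrix.mul_add, Matrix.mul_add,
    Matrix.trace_add, Matrix.trace_add, Matrix.trace_add, h]
  ring

/-- M* minimizes M ↦ ‖(I − L Lᵀ) Y + L Lᵀ Ŷ − L M Lᵀ X̂‖_F². -/
theorem omdc_optimal_M (n r m : ℕ)
    (Y Xh Yh : Matrix (Fin n) (Fin (m - 1)) ℝ)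
    (L : Matrix (Fin n) (Fin r) ℝ) (hL : Lᵀ * L = 1)
    (hinv : IsUnit (Lᵀ * Xh * Xhᵀ * L)) :
    ∀ M : Matrix (Fin r) (Fin r) ℝ,
      frobSq (((1 : Matrix (Fin n) (Fin n) ℝ) - L * Lᵀ) * Y + L * Lᵀ * Yh -
        L * (Lᵀ * Yh * Xhᵀ * L * (Lᵀ * Xh * Xhᵀ * L)⁻¹) * Lᵀ * Xh) ≤
      frobSq (((1 : Matrix (Fin n) (Fin n) ℝ) - L * Lᵀ) * Y + L * Lᵀ * Yh -
        L * M * Lᵀ * Xh) := by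
  intro M
  set G : Matrix (Fin r) (Fin r) ℝ := Lᵀ * Xh * Xhᵀ * L with hG
  set M₀ : Matrix (Fin r) (Fin r) ℝ := Lᵀ * Yh * Xhᵀ * L * G⁻¹ with hM₀
  set A : Matrix (Fin n) (Fin (m - 1)) ℝ :=
    ((1 : Matrix (Fin n) (Fin n) ℝ) - L * Lᵀ) * Y + L * Lᵀ * Yh - L * M₀ * Lᵀ * Xh with hA
  have hGinv : G⁻¹ * G = 1 :=
    Matrix.nonsing_inv_mul G ((Matrix.isUnit_iff_isUnit_det G).mp hinv)
  -- L'A = LᵀYh - M₀ Lᵀ Xh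
  have hLA : Lᵀ * A = Lᵀ * Yh - M₀ * (Lᵀ * Xh) := by
    rw [hA]
    rw [Matrix.mul_sub, Matrix.mul_add, Matrix.sub_mul, Matrix.one_mul]
    have h1 : Lᵀ * (L * Lᵀ * Y) = Lᵀ * Y := by
      rw [← Matrix.mul_assoc, ← Matrix.mul_assoc, hL, Matrix.one_mul]
    have h2 : Lᵀ * (L * Lᵀ * Yh) = Lᵀ * Yh := by
      rw [← Matrix.mul_assoc, ← Matrix.mul_assoc, hL, Matrix.one_mul]
    have h3 : Lᵀ * (L * M₀ * Lᵀ * Xh) = M₀ * (Lᵀ * Xh) := by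
      simp only [← Matrix.mul_assoc, hL, Matrix.one_mul]
    rw [Matrix.mul_sub, h1, h2, h3]
    abel
  -- normal equation: Lᵀ A Xhᵀ L = 0
  have hnormal : Lᵀ * A * (Xhᵀ * L) = 0 := by
    rw [hLA, Matrix.sub_mul]
    have : M₀ * (Lᵀ * Xh) * (Xhᵀ * L) = Lᵀ * Yh * (Xhᵀ * L) := by
      rw [hM₀]
      have : Lᵀ * Yh * Xhᵀ * L * G⁻¹ * (Lᵀ * Xh) * (Xhᵀ * L)
          = Lᵀ * Yh * Xhᵀ * L * (G⁻¹ * G) := by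
        rw [hG]
        simp only [Matrix.mul_assoc]
      rw [this, hGinv, Matrix.mul_one, Matrix.mul_assoc]
    rw [this, Matrix.mul_assoc, sub_self]
  -- decompose residual
  have hdecomp : ((1 : Matrix (Fin n) (Fin n) ℝ) - L * Lᵀ) * Y + L * Lᵀ * Yh -
        L * M * Lᵀ * Xh = A + L * (M₀ - M) * Lᵀ * Xh := by
    rw [hA]
    simp only [Matrix.sub_mul, Matrix.mul_sub]
    abel
  rw [hdecomp, frobSq_add]
  have hcross : Matrix.trace (Aᵀ * (L * (M₀ - M) * Lᵀ * Xh)) = 0 := by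
    have h1 : Aᵀ * (L * (M₀ - M) * Lᵀ * Xh) = (Aᵀ * L) * ((M₀ - M) * (Lᵀ * Xh)) := by
      simp only [Matrix.mul_assoc]
    rw [h1, Matrix.trace_mul_comm]
    have h2 : (M₀ - M) * (Lᵀ * Xh) * (Aᵀ * L) = (M₀ - M) * ((Lᵀ * Xh) * (Aᵀ * L)) := by
      rw [Matrix.mul_assoc]
    have h3 : (Lᵀ * Xh) * (Aᵀ * L) = 0 := by
      have := congrArg Matrix.transpose hnormal
      simpa [Matrix.transpose_mul, Matrix.mul_assoc] using this
    rw [h2, h3, Matrix.mul_zero, Matrix.trace_zero]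
  rw [hcross]
  have := frobSq_nonneg (L * (M₀ - M) * Lᵀ * Xh)
  linarith
end

section
/- Let S ∈ ℝ^{n×m} with n ≥ m, and let S = Q̄ R̄ be a QR factorization with Q̄ ∈ ℝ^{n×m}, Q̄ᵀ Q̄ = I. Write X = S[:, 0:m−1], Y = S[:, 1:m], X̄ = R̄[:, 0:m−1], Ȳ = R̄[:, 1:m]. Then for every L̄ ∈ ℝ^{m×r} with L̄ᵀ L̄ = I, and all M ∈ ℝ^{r×r}, P ∈ ℝ^{r×p}, U ∈ ℝ^{p×(m−1)}: ‖Ȳ − L̄ M L̄ᵀ X̄ − L̄ P U‖_F = ‖Y − (Q̄L̄) M (Q̄L̄)ᵀ X − (Q̄L̄) P U‖_F, and (Q̄L̄)ᵀ(Q̄L̄) = I. -/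
open Matrix

noncomputable def frob {α β : Type*} [Fintype α] [Fintype β]
    (A : Matrix α β ℝ) : ℝ := Real.sqrt (Matrix.trace (Aᵀ * A))

lemma frob_mul_left {n m k : ℕ} (Q : Matrix (Fin n) (Fin m) ℝ)
    (hQ : Qᵀ * Q = 1) (A : Matrix (Fin m) (Fin k) ℝ) :
    frob (Q * A) = frob A := by
  unfold frob
  congr 1
  rw [transpose_mul, Matrix.mul_assoc, ← Matrix.mul_assoc Qᵀ, hQ, Matrix.one_mul]

lemma submatrix_mul_id {n m k : ℕ} (A : Matrix (Fin n) (Fin m) ℝ)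
    (B : Matrix (Fin m) (Fin m) ℝ) (f : Fin k → Fin m) :
    (A * B).submatrix id f = A * B.submatrix id f := by
  ext i j
  simp [Matrix.mul_apply]

/-- equivalence of the OMDc problem and its reduced m-dimensional version
obtained from a thin QR factorization S = Q̄ R̄. -/
theorem omdc_qr_reduction (n m r p : ℕ)
    (S : Matrix (Fin n) (Fin (m + 1)) ℝ)
    (Qb : Matrix (Fin n) (Fin (m + 1)) ℝ)
    (Rb : Matrix (Fin (m + 1)) (Fin (m + 1)) ℝ)
    (hQR : S = Qb * Rb) (hQb : Qbᵀ * Qb = 1)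
    (Lb : Matrix (Fin (m + 1)) (Fin r) ℝ) (hLb : Lbᵀ * Lb = 1)
    (M : Matrix (Fin r) (Fin r) ℝ) (P : Matrix (Fin r) (Fin p) ℝ)
    (U : Matrix (Fin p) (Fin m) ℝ) :
    frob (Rb.submatrix id Fin.succ - Lb * M * Lbᵀ * Rb.submatrix id Fin.castSucc -
        Lb * P * U) =
      frob (S.submatrix id Fin.succ -
        (Qb * Lb) * M * (Qb * Lb)ᵀ * S.submatrix id Fin.castSucc -
        (Qb * Lb) * P * U) ∧
    (Qb * Lb)ᵀ * (Qb * Lb) = 1 := by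
  have hQL : (Qb * Lb)ᵀ * (Qb * Lb) = 1 := by
    rw [transpose_mul, Matrix.mul_assoc, ← Matrix.mul_assoc Qbᵀ, hQb, Matrix.one_mul, hLb]
  refine ⟨?_, hQL⟩
  subst hQR
  rw [submatrix_mul_id, submatrix_mul_id]
  have key : Qb * Rb.submatrix id Fin.succ -
      Qb * Lb * M * (Qb * Lb)ᵀ * (Qb * Rb.submatrix id Fin.castSucc) -
      Qb * Lb * P * U =
      Qb * (Rb.submatrix id Fin.succ - Lb * M * Lbᵀ * Rb.submatrix id Fin.castSucc -
        Lb * P * U) := by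
    have h1 : Qb * Lb * M * (Qb * Lb)ᵀ * (Qb * Rb.submatrix id Fin.castSucc) =
        Qb * (Lb * M * Lbᵀ * Rb.submatrix id Fin.castSucc) := by
      rw [transpose_mul]
      calc Qb * Lb * M * (Lbᵀ * Qbᵀ) * (Qb * Rb.submatrix id Fin.castSucc)
          = Qb * (Lb * M * Lbᵀ) * (Qbᵀ * Qb) * Rb.submatrix id Fin.castSucc := by
            simp only [Matrix.mul_assoc]
        _ = _ := by rw [hQb, Matrix.mul_one, Matrix.mul_assoc]
    have h2 : Qb * Lb * P * U = Qb * (Lb * P * U) := by simp only [Matrix.mul_assoc]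
    rw [Matrix.mul_sub, Matrix.mul_sub, h1, h2]
  rw [key, frob_mul_left Qb hQb]
end
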